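/- Let Z be standard normal and U ~ χ²_m/m independent of Z, with σ² > 0 fixed. Then for every fixed t ≥ 0, the function a(τ²) := P( (τ² + σ²)Z² / (τ² + σ²U) ≥ t ) is non-increasing in τ² ∈ [0, ∞). -/

import Mathlib

open MeasureTheory

/-- Density of the standard normal distribution. -/
noncomputable def stdNormalPDF (t : ℝ) : ℝ :=
  (Real.sqrt (2 * Real.pi))⁻¹ * Real.exp (-(t ^ 2) / 2)

/-- Density of `U = V/m` where `V ~ χ²_m`. -/
noncomputable def chi2OverMPDF (m : ℕ) (u : ℝ) : ℝ :=
  if 0 < u then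
    (m : ℝ) * (((m : ℝ) * u) ^ ((m : ℝ) / 2 - 1) * Real.exp (-((m : ℝ) * u) / 2)) /
      (2 ^ ((m : ℝ) / 2) * Real.Gamma ((m : ℝ) / 2))
  else 0

open Real Set


lemma phi_pos (z : ℝ) : 0 < stdNormalPDF z := by
  unfold stdNormalPDF
  positivity

lemma phi_cont : Continuous stdNormalPDF := by
  unfold stdNormalPDF
  continuity

lemma phi_integrable : Integrable stdNormalPDF := by
  unfold stdNormalPDF
  refine Integrable.const_mul ?_ _
  have : (fun t : ℝ => Real.exp (-(t^2)/2)) = fun t : ℝ => Real.exp (-(1/2) * t^2) := by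
    ext t; ring_nf
  rw [this]
  exact integrable_exp_neg_mul_sq (by norm_num)

lemma phi_integral : ∫ z, stdNormalPDF z = 1 := by
  unfold stdNormalPDF
  rw [integral_const_mul]
  have : (fun t : ℝ => Real.exp (-(t^2)/2)) = fun t : ℝ => Real.exp (-(1/2) * t^2) := by
    ext t; ring_nf
  rw [this, integral_gaussian]
  rw [inv_mul_eq_div, div_eq_one_iff_eq (by positivity)]
  rw [show π / (1/2) = 2 * π by ring]

lemma chi2_measurable (m : ℕ) : Measurable (chi2OverMPDF m) := by
  unfold chi2OverMPDF
  refine Measurable.ite measurableSet_Ioi ?_ measurable_const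
  fun_prop

lemma chi2_nonneg (m : ℕ) (u : ℝ) : 0 ≤ chi2OverMPDF m u := by
  unfold chi2OverMPDF
  split_ifs with h
  · have h2 : (0:ℝ) ≤ (m:ℝ) * u := by positivity
    positivity
  · exact le_refl 0

lemma chi2_eq (m : ℕ) {u : ℝ} (hu : 0 < u) :
    chi2OverMPDF m u = ((m:ℝ) ^ ((m:ℝ)/2) / (2 ^ ((m:ℝ)/2) * Real.Gamma ((m:ℝ)/2))) *
      (u ^ ((m:ℝ)/2 - 1) * Real.exp (-((m:ℝ)/2 * u))) := by
  unfold chi2OverMPDF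
  rw [if_pos hu]
  rcases Nat.eq_zero_or_pos m with rfl | hm
  · simp
  have hm0 : (0:ℝ) < m := by exact_mod_cast hm
  rw [Real.mul_rpow hm0.le hu.le]
  rw [show -((m:ℝ) * u) / 2 = -((m:ℝ)/2 * u) by ring]
  have : (m:ℝ) * (m:ℝ) ^ ((m:ℝ)/2 - 1) = (m:ℝ) ^ ((m:ℝ)/2) := by
    rw [Real.rpow_sub hm0, Real.rpow_one]
    field_simp
  field_simp
  rw [show ((m:ℝ)-2)/2 = ((m:ℝ)/2 - 1) by ring, ← this]

lemma chi2_integrableOn (m : ℕ) (hm : 1 ≤ m) : IntegrableOn (chi2OverMPDF m) (Set.Ioi 0) := by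
  have hs : (0:ℝ) < (m:ℝ)/2 := by
    have : (1:ℝ) ≤ m := by exact_mod_cast hm
    linarith
  have h1 : IntegrableOn (fun u : ℝ =>
      ((m:ℝ) ^ ((m:ℝ)/2) / (2 ^ ((m:ℝ)/2) * Real.Gamma ((m:ℝ)/2))) *
      (u ^ ((m:ℝ)/2 - 1) * Real.exp (-((m:ℝ)/2 * u)))) (Set.Ioi 0) := by
    refine Integrable.const_mul ?_ _
    have := integrableOn_rpow_mul_exp_neg_mul_rpow
      (show (-1:ℝ) < (m:ℝ)/2 - 1 by linarith) (by norm_num : (0:ℝ) < 1) hs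
    refine this.congr_fun (fun x hx => ?_) measurableSet_Ioi
    beta_reduce
    rw [Real.rpow_one]
    ring_nf
  exact h1.congr_fun (fun u hu => (chi2_eq m hu).symm) measurableSet_Ioi

lemma chi2_integral (m : ℕ) (hm : 1 ≤ m) : ∫ u in Set.Ioi 0, chi2OverMPDF m u = 1 := by
  have hs : (0:ℝ) < (m:ℝ)/2 := by
    have : (1:ℝ) ≤ m := by exact_mod_cast hm
    linarith
  rw [setIntegral_congr_fun measurableSet_Ioi (fun u hu => chi2_eq m hu)]
  rw [integral_const_mul]
  have : ∀ u : ℝ, Real.exp (-((m:ℝ)/2 * u)) = Real.exp (-((m:ℝ)/2 * u)) := fun _ => rfl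
  rw [Real.integral_rpow_mul_exp_neg_mul_Ioi hs hs]
  have hΓ : 0 < Real.Gamma ((m:ℝ)/2) := Real.Gamma_pos_of_pos hs
  rw [Real.div_rpow (by norm_num) (le_of_lt hs)]
  have h2 : ((m:ℝ)/2) ^ ((m:ℝ)/2) = (m:ℝ) ^ ((m:ℝ)/2) / 2 ^ ((m:ℝ)/2) := by
    rw [Real.div_rpow (by positivity) (by norm_num)]
  have hm2 : (0:ℝ) < (m:ℝ) ^ ((m:ℝ)/2) := Real.rpow_pos_of_pos (by positivity) _
  have h22 : (0:ℝ) < (2:ℝ) ^ ((m:ℝ)/2) := Real.rpow_pos_of_pos (by norm_num) _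
  rw [Real.one_rpow, h2]
  field_simp

lemma chi2_mean_integrableOn (m : ℕ) (hm : 1 ≤ m) :
    IntegrableOn (fun u => u * chi2OverMPDF m u) (Set.Ioi 0) := by
  have hs : (0:ℝ) < (m:ℝ)/2 := by
    have : (1:ℝ) ≤ m := by exact_mod_cast hm
    linarith
  have h1 : IntegrableOn (fun u : ℝ =>
      ((m:ℝ) ^ ((m:ℝ)/2) / (2 ^ ((m:ℝ)/2) * Real.Gamma ((m:ℝ)/2))) *
      (u ^ ((m:ℝ)/2) * Real.exp (-((m:ℝ)/2 * u)))) (Set.Ioi 0) := by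
    refine Integrable.const_mul ?_ _
    have := integrableOn_rpow_mul_exp_neg_mul_rpow
      (show (-1:ℝ) < (m:ℝ)/2 by linarith) (by norm_num : (0:ℝ) < 1) hs
    refine this.congr_fun (fun x hx => ?_) measurableSet_Ioi
    beta_reduce
    rw [Real.rpow_one]
    ring_nf
  refine h1.congr_fun (fun u hu => ?_) measurableSet_Ioi
  rw [chi2_eq m hu]
  beta_reduce
  rw [show ((m:ℝ)/2) = ((m:ℝ)/2 - 1) + 1 by ring, Real.rpow_add_one (ne_of_gt hu)]
  ring

lemma chi2_mean (m : ℕ) (hm : 1 ≤ m) : ∫ u in Set.Ioi 0, u * chi2OverMPDF m u = 1 := by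
  have hs : (0:ℝ) < (m:ℝ)/2 := by
    have : (1:ℝ) ≤ m := by exact_mod_cast hm
    linarith
  have key : ∀ u ∈ Set.Ioi (0:ℝ), u * chi2OverMPDF m u =
      ((m:ℝ) ^ ((m:ℝ)/2) / (2 ^ ((m:ℝ)/2) * Real.Gamma ((m:ℝ)/2))) *
      (u ^ (((m:ℝ)/2 + 1) - 1) * Real.exp (-((m:ℝ)/2 * u))) := by
    intro u hu
    rw [chi2_eq m hu]
    rw [show (((m:ℝ)/2 + 1) - 1) = ((m:ℝ)/2 - 1) + 1 by ring,
      Real.rpow_add_one (ne_of_gt hu)]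
    ring
  rw [setIntegral_congr_fun measurableSet_Ioi key, integral_const_mul,
    Real.integral_rpow_mul_exp_neg_mul_Ioi (by linarith) hs,
    Real.Gamma_add_one (ne_of_gt hs)]
  have hΓ : 0 < Real.Gamma ((m:ℝ)/2) := Real.Gamma_pos_of_pos hs
  rw [Real.div_rpow (by norm_num) (le_of_lt hs), Real.one_rpow,
    Real.rpow_add (by linarith : (0:ℝ) < (m:ℝ)/2), Real.rpow_one,
    Real.div_rpow (by positivity) (by norm_num : (0:ℝ) ≤ 2)]
  have hm2 : (0:ℝ) < (m:ℝ) ^ ((m:ℝ)/2) := Real.rpow_pos_of_pos (by positivity) _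
  have h22 : (0:ℝ) < (2:ℝ) ^ ((m:ℝ)/2) := Real.rpow_pos_of_pos (by norm_num) _
  have hm0 : (0:ℝ) < (m:ℝ) := by positivity
  field_simp

noncomputable def tailG (x : ℝ) : ℝ := ∫ z in {z : ℝ | x ≤ z^2}, stdNormalPDF z

lemma sq_set_meas (x : ℝ) : MeasurableSet {z : ℝ | x ≤ z^2} := by
  have : Measurable fun z : ℝ => z^2 := by fun_prop
  exact measurableSet_le measurable_const this

lemma sq_set_eq {a : ℝ} (ha : 0 < a) :
    {z : ℝ | a ≤ z^2} = Set.Iic (-Real.sqrt a) ∪ Set.Ici (Real.sqrt a) := by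
  ext z
  have h1 : a ≤ z^2 ↔ Real.sqrt a ≤ |z| := by
    rw [← Real.sqrt_sq_eq_abs]
    exact (Real.sqrt_le_sqrt_iff (sq_nonneg z)).symm
  simp only [Set.mem_setOf_eq, Set.mem_union, Set.mem_Iic, Set.mem_Ici, h1]
  rcases abs_cases z with ⟨h, _⟩ | ⟨h, _⟩
  · rw [h]
    constructor
    · intro hz; right; exact hz
    · rintro (hz | hz)
      · have := Real.sqrt_nonneg a; linarith
      · exact hz
  · rw [h]
    constructor
    · intro hz; left; linarith
    · rintro (hz | hz)
      · linarith
      · have := Real.sqrt_nonneg a; linarith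

lemma sq_set_split {a b : ℝ} (ha : 0 < a) (hab : a ≤ b) :
    {z : ℝ | a ≤ z^2} = {z : ℝ | b ≤ z^2} ∪
      (Set.Ioc (-Real.sqrt b) (-Real.sqrt a) ∪ Set.Ico (Real.sqrt a) (Real.sqrt b)) := by
  have hb : 0 < b := lt_of_lt_of_le ha hab
  have hsab : Real.sqrt a ≤ Real.sqrt b := Real.sqrt_le_sqrt hab
  rw [sq_set_eq ha, sq_set_eq hb]
  ext z
  simp only [Set.mem_union, Set.mem_Iic, Set.mem_Ici, Set.mem_Ioc, Set.mem_Ico]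
  constructor
  · rintro (h | h)
    · by_cases hz : z ≤ -Real.sqrt b
      · left; left; exact hz
      · right; left; exact ⟨lt_of_not_ge hz, h⟩
    · by_cases hz : Real.sqrt b ≤ z
      · left; right; exact hz
      · right; right; exact ⟨h, lt_of_not_ge hz⟩
  · rintro ((h | h) | (⟨h1, h2⟩ | ⟨h1, h2⟩))
    · left; linarith
    · right; linarith
    · left; exact h2
    · right; exact h1

lemma sq_set_split_disjoint {a b : ℝ} (ha : 0 < a) (hab : a ≤ b) :
    Disjoint {z : ℝ | b ≤ z^2}
      (Set.Ioc (-Real.sqrt b) (-Real.sqrt a) ∪ Set.Ico (Real.sqrt a) (Real.sqrt b)) := by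
  have hb : 0 < b := lt_of_lt_of_le ha hab
  rw [sq_set_eq hb, Set.disjoint_union_left, Set.disjoint_union_right, Set.disjoint_union_right]
  refine ⟨⟨?_, ?_⟩, ⟨?_, ?_⟩⟩ <;>
    · rw [Set.disjoint_left]
      intro z hz hz'
      simp only [Set.mem_Iic, Set.mem_Ici, Set.mem_Ioc, Set.mem_Ico] at hz hz'
      have := Real.sqrt_nonneg a
      have := Real.sqrt_nonneg b
      first
      | linarith [hz'.1, hz'.2]
      | linarith [hz'.1]

lemma tailG_diff {a b : ℝ} (ha : 0 < a) (hab : a ≤ b) :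
    tailG a - tailG b = (∫ z in Set.Ioc (-Real.sqrt b) (-Real.sqrt a), stdNormalPDF z) +
      ∫ z in Set.Ico (Real.sqrt a) (Real.sqrt b), stdNormalPDF z := by
  have key : tailG a = tailG b + ((∫ z in Set.Ioc (-Real.sqrt b) (-Real.sqrt a), stdNormalPDF z) +
      ∫ z in Set.Ico (Real.sqrt a) (Real.sqrt b), stdNormalPDF z) := by
    unfold tailG
    rw [sq_set_split ha hab]
    rw [setIntegral_union (sq_set_split_disjoint ha hab)
      (MeasurableSet.union measurableSet_Ioc measurableSet_Ico)
      (phi_integrable.integrableOn) (phi_integrable.integrableOn)]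
    rw [setIntegral_union ?_ measurableSet_Ico
      (phi_integrable.integrableOn) (phi_integrable.integrableOn)]
    rw [Set.disjoint_left]
    intro z hz hz'
    simp only [Set.mem_Ioc, Set.mem_Ico] at hz hz'
    have := Real.sqrt_pos.mpr ha
    linarith [hz.2, hz'.1]
  rw [key]; ring

lemma phi_sqrt (x : ℝ) (hx : 0 ≤ x) :
    stdNormalPDF (Real.sqrt x) = (Real.sqrt (2 * Real.pi))⁻¹ * Real.exp (-x / 2) := by
  unfold stdNormalPDF
  rw [Real.sq_sqrt hx]

lemma phi_bound_piece {a b : ℝ} (ha : 0 < a) (hab : a ≤ b) (S : Set ℝ)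
    (hS : MeasurableSet S) (hSsub : ∀ z ∈ S, a ≤ z^2 ∧ z^2 ≤ b)
    (hvol : volume S = ENNReal.ofReal (Real.sqrt b - Real.sqrt a)) :
    (Real.sqrt b - Real.sqrt a) * stdNormalPDF (Real.sqrt b) ≤ (∫ z in S, stdNormalPDF z) ∧
    (∫ z in S, stdNormalPDF z) ≤ (Real.sqrt b - Real.sqrt a) * stdNormalPDF (Real.sqrt a) := by
  have hb : 0 < b := lt_of_lt_of_le ha hab
  have hsab : Real.sqrt a ≤ Real.sqrt b := Real.sqrt_le_sqrt hab
  have hlow : ∀ z ∈ S, stdNormalPDF (Real.sqrt b) ≤ stdNormalPDF z := by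
    intro z hz
    rw [phi_sqrt b hb.le]
    unfold stdNormalPDF
    refine mul_le_mul_of_nonneg_left (Real.exp_le_exp.mpr ?_) (by positivity)
    linarith [(hSsub z hz).2]
  have hhigh : ∀ z ∈ S, stdNormalPDF z ≤ stdNormalPDF (Real.sqrt a) := by
    intro z hz
    rw [phi_sqrt a ha.le]
    unfold stdNormalPDF
    refine mul_le_mul_of_nonneg_left (Real.exp_le_exp.mpr ?_) (by positivity)
    linarith [(hSsub z hz).1]
  constructor
  · calc (Real.sqrt b - Real.sqrt a) * stdNormalPDF (Real.sqrt b)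
        = ∫ _ in S, stdNormalPDF (Real.sqrt b) := by
          rw [setIntegral_const, measureReal_def, hvol, ENNReal.toReal_ofReal (by linarith), smul_eq_mul]
      _ ≤ ∫ z in S, stdNormalPDF z := by
          refine setIntegral_mono_on (integrableOn_const ?_) phi_integrable.integrableOn hS hlow
          rw [hvol]; exact ENNReal.ofReal_ne_top
  · calc (∫ z in S, stdNormalPDF z)
        ≤ ∫ _ in S, stdNormalPDF (Real.sqrt a) := by
          refine setIntegral_mono_on phi_integrable.integrableOn (integrableOn_const ?_) hS hhigh
          rw [hvol]; exact ENNReal.ofReal_ne_top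
      _ = (Real.sqrt b - Real.sqrt a) * stdNormalPDF (Real.sqrt a) := by
          rw [setIntegral_const, measureReal_def, hvol, ENNReal.toReal_ofReal (by linarith), smul_eq_mul]

lemma tailG_slope {a b : ℝ} (ha : 0 < a) (hab : a ≤ b) :
    (b - a) * (stdNormalPDF (Real.sqrt b) / Real.sqrt b) ≤ tailG a - tailG b ∧
    tailG a - tailG b ≤ (b - a) * (stdNormalPDF (Real.sqrt a) / Real.sqrt a) := by
  have hb : 0 < b := lt_of_lt_of_le ha hab
  have hsa : 0 < Real.sqrt a := Real.sqrt_pos.mpr ha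
  have hsb : 0 < Real.sqrt b := Real.sqrt_pos.mpr hb
  have hsab : Real.sqrt a ≤ Real.sqrt b := Real.sqrt_le_sqrt hab
  have ha' : Real.sqrt a * Real.sqrt a = a := Real.mul_self_sqrt ha.le
  have hb' : Real.sqrt b * Real.sqrt b = b := Real.mul_self_sqrt hb.le
  have hp1 := phi_bound_piece ha hab (Set.Ioc (-Real.sqrt b) (-Real.sqrt a)) measurableSet_Ioc
    (fun z hz => by
      simp only [Set.mem_Ioc] at hz
      constructor <;> nlinarith [hz.1, hz.2])
    (by rw [Real.volume_Ioc]; congr 1; ring)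
  have hp2 := phi_bound_piece ha hab (Set.Ico (Real.sqrt a) (Real.sqrt b)) measurableSet_Ico
    (fun z hz => by
      simp only [Set.mem_Ico] at hz
      constructor <;> nlinarith [hz.1, hz.2])
    (by rw [Real.volume_Ico])
  rw [tailG_diff ha hab]
  have hφa : 0 ≤ stdNormalPDF (Real.sqrt a) := (phi_pos _).le
  have hφb : 0 ≤ stdNormalPDF (Real.sqrt b) := (phi_pos _).le
  constructor
  · have : (b - a) * (stdNormalPDF (Real.sqrt b) / Real.sqrt b) ≤
        2 * ((Real.sqrt b - Real.sqrt a) * stdNormalPDF (Real.sqrt b)) := by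
      rw [← mul_div_assoc, div_le_iff₀ hsb]
      nlinarith [sq_nonneg (Real.sqrt a - Real.sqrt b)]
    linarith [hp1.1, hp2.1]
  · have : 2 * ((Real.sqrt b - Real.sqrt a) * stdNormalPDF (Real.sqrt a)) ≤
        (b - a) * (stdNormalPDF (Real.sqrt a) / Real.sqrt a) := by
      rw [← mul_div_assoc, le_div_iff₀ hsa]
      nlinarith [sq_nonneg (Real.sqrt a - Real.sqrt b)]
    linarith [hp1.2, hp2.2]

lemma tailG_convex_aux {x y θ η : ℝ} (hx : 0 < x) (hxy : x ≤ y) (hθ : 0 ≤ θ) (hη : 0 ≤ η)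
    (hsum : θ + η = 1) : tailG (θ*x + η*y) ≤ θ * tailG x + η * tailG y := by
  set z := θ*x + η*y with hzdef
  have hzx : z - x = η*(y-x) := by rw [hzdef]; linear_combination x*hsum
  have hzy : y - z = θ*(y-x) := by rw [hzdef]; linear_combination (-y)*hsum
  have hxz : x ≤ z := by nlinarith
  have hzyl : z ≤ y := by nlinarith
  have hz0 : 0 < z := lt_of_lt_of_le hx hxz
  have l1 := (tailG_slope hx hxz).1
  have l2 := (tailG_slope hz0 hzyl).2
  have m1 := mul_le_mul_of_nonneg_left l1 hθ
  have m2 := mul_le_mul_of_nonneg_left l2 hη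
  have heq : θ*((z - x) * (stdNormalPDF (Real.sqrt z) / Real.sqrt z))
      = η*((y - z) * (stdNormalPDF (Real.sqrt z) / Real.sqrt z)) := by rw [hzx, hzy]; ring
  have e1 : θ*(tailG x - tailG z) = θ*tailG x - θ*tailG z := by ring
  have e2 : η*(tailG z - tailG y) = η*tailG z - η*tailG y := by ring
  have e3 : θ * tailG z + η * tailG z = tailG z := by rw [← add_mul, hsum, one_mul]
  rw [e1] at m1
  rw [e2] at m2
  linarith

lemma tailG_convex {x y θ η : ℝ} (hx : 0 < x) (hy : 0 < y) (hθ : 0 ≤ θ) (hη : 0 ≤ η)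
    (hsum : θ + η = 1) : tailG (θ*x + η*y) ≤ θ * tailG x + η * tailG y := by
  rcases le_total x y with h | h
  · exact tailG_convex_aux hx h hθ hη hsum
  · rw [show θ*x + η*y = η*y + θ*x by ring, show θ * tailG x + η * tailG y
      = η * tailG y + θ * tailG x by ring]
    exact tailG_convex_aux hy h hη hθ (by linarith)

lemma tailG_support {t w : ℝ} (htpos : 0 < t) (hw : 0 < w) :
    tailG t - (stdNormalPDF (Real.sqrt t) / Real.sqrt t) * (w - t) ≤ tailG w := by
  rcases le_total t w with h | h
  · have := (tailG_slope htpos h).2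
    nlinarith
  · have := (tailG_slope hw h).1
    nlinarith

lemma tailG_nonneg (x : ℝ) : 0 ≤ tailG x :=
  setIntegral_nonneg (sq_set_meas x) (fun z _ => (phi_pos z).le)

lemma tailG_le_one (x : ℝ) : tailG x ≤ 1 := by
  rw [← phi_integral]
  exact setIntegral_le_integral phi_integrable (ae_of_all _ fun z => (phi_pos z).le)

lemma tailG_anti : Antitone tailG := by
  intro x y hxy
  refine setIntegral_mono_set phi_integrable.integrableOn
    (ae_of_all _ fun z => (phi_pos z).le) (HasSubset.Subset.eventuallyLE ?_)
  intro z hz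
  simp only [Set.mem_setOf_eq] at hz ⊢
  linarith

lemma tailG_measurable : Measurable tailG := tailG_anti.measurable

/-- `a(τ²) = P((τ² + σ²) Z² / (τ² + σ² U) ≥ t)` for `Z` standard normal and `U ~ χ²_m/m`
independent. -/
noncomputable def aFun (m : ℕ) (σ2 t τ2 : ℝ) : ℝ :=
  ∫ z : ℝ, ∫ u in Set.Ioi (0 : ℝ),
    Set.indicator {p : ℝ × ℝ | t ≤ (τ2 + σ2) * p.1 ^ 2 / (τ2 + σ2 * p.2)}
      (fun _ => (1 : ℝ)) (z, u) * stdNormalPDF z * chi2OverMPDF m u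

/-- The Welch-type squared statistic tail probability is non-increasing in the inflation
parameter `τ²`. -/
lemma aFun_repr (m : ℕ) (hm : 1 ≤ m) {σ2 t τ : ℝ} (hσ : 0 < σ2) (hτ : 0 ≤ τ) :
    aFun m σ2 t τ =
      ∫ u in Set.Ioi 0, tailG (t * (τ + σ2 * u) / (τ + σ2)) * chi2OverMPDF m u := by
  have hN : 0 < τ + σ2 := by linarith
  set S := {p : ℝ × ℝ | t ≤ (τ + σ2) * p.1 ^ 2 / (τ + σ2 * p.2)} with hSdef
  have hSmeas : MeasurableSet S := by
    apply measurableSet_le measurable_const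
    fun_prop
  have hmeas : Measurable (fun p : ℝ × ℝ =>
      S.indicator (fun _ => (1:ℝ)) p * stdNormalPDF p.1 * chi2OverMPDF m p.2) :=
    ((measurable_const.indicator hSmeas).mul
      (phi_cont.measurable.comp measurable_fst)).mul
      ((chi2_measurable m).comp measurable_snd)
  have hbase : Integrable (fun p : ℝ × ℝ => stdNormalPDF p.1 * chi2OverMPDF m p.2)
      ((volume : Measure ℝ).prod ((volume : Measure ℝ).restrict (Set.Ioi 0))) :=
    Integrable.mul_prod phi_integrable (chi2_integrableOn m hm)
  have hint : Integrable (Function.uncurry (fun z u =>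
      S.indicator (fun _ => (1:ℝ)) (z, u) * stdNormalPDF z * chi2OverMPDF m u))
      ((volume : Measure ℝ).prod ((volume : Measure ℝ).restrict (Set.Ioi 0))) := by
    refine hbase.mono' hmeas.aestronglyMeasurable (ae_of_all _ fun p => ?_)
    by_cases hp : p ∈ S
    · rw [Function.uncurry, Set.indicator_of_mem hp, one_mul, Real.norm_eq_abs,
        abs_of_nonneg (mul_nonneg (phi_pos _).le (chi2_nonneg _ _))]
    · rw [Function.uncurry, Set.indicator_of_notMem hp, zero_mul, zero_mul, norm_zero]
      exact mul_nonneg (phi_pos _).le (chi2_nonneg _ _)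
  unfold aFun
  rw [integral_integral_swap hint]
  refine setIntegral_congr_fun measurableSet_Ioi (fun u hu => ?_)
  have hd : 0 < τ + σ2 * u := by
    have : 0 < u := hu
    nlinarith
  have hmem : ∀ z : ℝ, ((z, u) ∈ S ↔ t * (τ + σ2 * u) / (τ + σ2) ≤ z ^ 2) := by
    intro z
    rw [hSdef]
    simp only [Set.mem_setOf_eq]
    rw [le_div_iff₀ hd, div_le_iff₀ hN, mul_comm (z^2) (τ + σ2)]
  have hfun : (fun z => S.indicator (fun _ => (1:ℝ)) (z, u) * stdNormalPDF z *
      chi2OverMPDF m u) = fun z =>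
      ({w : ℝ | t * (τ + σ2 * u) / (τ + σ2) ≤ w ^ 2}.indicator stdNormalPDF z) *
        chi2OverMPDF m u := by
    ext z
    by_cases hz : t * (τ + σ2 * u) / (τ + σ2) ≤ z ^ 2
    · have hz' : z ∈ {w : ℝ | t * (τ + σ2 * u) / (τ + σ2) ≤ w ^ 2} := hz
      rw [Set.indicator_of_mem ((hmem z).mpr hz), Set.indicator_of_mem hz', one_mul]
    · have hz' : z ∉ {w : ℝ | t * (τ + σ2 * u) / (τ + σ2) ≤ w ^ 2} := hz
      rw [Set.indicator_of_notMem (fun h => hz ((hmem z).mp h)),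
        Set.indicator_of_notMem hz', zero_mul, zero_mul]
  rw [hfun, integral_mul_const, integral_indicator (sq_set_meas _)]
  rfl

theorem stmt_1 (m : ℕ) (hm : 1 ≤ m) (σ2 : ℝ) (hσ : 0 < σ2) (t : ℝ) (ht : 0 ≤ t) :
    AntitoneOn (aFun m σ2 t) (Set.Ici 0) := by
  intro τ hτ τ' hτ' hle
  simp only [Set.mem_Ici] at hτ hτ'
  rw [aFun_repr m hm hσ hτ, aFun_repr m hm hσ hτ']
  rcases eq_or_lt_of_le ht with rfl | htpos
  · apply le_of_eq
    have h0 : ∀ τ0 : ℝ, (fun u : ℝ => tailG (0 * (τ0 + σ2 * u) / (τ0 + σ2)) * chi2OverMPDF m u)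
        = fun u => tailG 0 * chi2OverMPDF m u := by
      intro τ0; ext u; norm_num
    rw [h0 τ, h0 τ']
  have hN : 0 < τ + σ2 := by linarith
  have hN' : 0 < τ' + σ2 := by linarith
  set θ := (τ + σ2) / (τ' + σ2) with hθdef
  have hθ0 : 0 < θ := div_pos hN hN'
  have hθ1 : θ ≤ 1 := (div_le_one hN').mpr (by linarith)
  set ψ := stdNormalPDF (Real.sqrt t) / Real.sqrt t with hψdef
  have hkpos : ∀ u ∈ Set.Ioi (0:ℝ), 0 < t * (τ + σ2 * u) / (τ + σ2) := by
    intro u hu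
    have hu' : (0:ℝ) < u := hu
    exact div_pos (mul_pos htpos (by nlinarith)) hN
  have hkpos' : ∀ u ∈ Set.Ioi (0:ℝ), 0 < t * (τ' + σ2 * u) / (τ' + σ2) := by
    intro u hu
    have hu' : (0:ℝ) < u := hu
    exact div_pos (mul_pos htpos (by nlinarith)) hN'
  have hmk : Measurable fun u : ℝ => tailG (t * (τ + σ2 * u) / (τ + σ2)) :=
    tailG_measurable.comp (by fun_prop)
  have hmk' : Measurable fun u : ℝ => tailG (t * (τ' + σ2 * u) / (τ' + σ2)) :=
    tailG_measurable.comp (by fun_prop)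
  have hbound : ∀ (g : ℝ → ℝ), Measurable g → (∀ x, 0 ≤ g x) → (∀ x, g x ≤ 1) →
      IntegrableOn (fun u => g u * chi2OverMPDF m u) (Set.Ioi 0) := by
    intro g hg hg0 hg1
    refine (chi2_integrableOn m hm).mono'
      ((hg.mul (chi2_measurable m)).aestronglyMeasurable) (ae_of_all _ fun u => ?_)
    rw [Real.norm_eq_abs, abs_of_nonneg (mul_nonneg (hg0 u) (chi2_nonneg m u))]
    nlinarith [hg0 u, hg1 u, chi2_nonneg m u]
  have I1 : IntegrableOn (fun u => tailG (t * (τ + σ2 * u) / (τ + σ2)) * chi2OverMPDF m u)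
      (Set.Ioi 0) := hbound _ hmk (fun x => tailG_nonneg _) (fun x => tailG_le_one _)
  have I1' : IntegrableOn (fun u => tailG (t * (τ' + σ2 * u) / (τ' + σ2)) * chi2OverMPDF m u)
      (Set.Ioi 0) := hbound _ hmk' (fun x => tailG_nonneg _) (fun x => tailG_le_one _)
  have I2 : IntegrableOn (chi2OverMPDF m) (Set.Ioi 0) := chi2_integrableOn m hm
  -- Jensen step
  set A0 : ℝ := tailG t + ψ * t - ψ * t * τ / (τ + σ2) with hA0
  set B0 : ℝ := ψ * t * σ2 / (τ + σ2) with hB0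
  have hIlin : IntegrableOn (fun u => A0 * chi2OverMPDF m u - B0 * (u * chi2OverMPDF m u))
      (Set.Ioi 0) := (I2.const_mul A0).sub ((chi2_mean_integrableOn m hm).const_mul B0)
  have hval : ∫ u in Set.Ioi 0,
      (A0 * chi2OverMPDF m u - B0 * (u * chi2OverMPDF m u)) = tailG t := by
    rw [integral_sub (I2.const_mul A0) ((chi2_mean_integrableOn m hm).const_mul B0),
      integral_const_mul, integral_const_mul, chi2_integral m hm, chi2_mean m hm,
      hA0, hB0]
    field_simp
    ring
  have hJ : tailG t ≤ ∫ u in Set.Ioi 0,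
      tailG (t * (τ + σ2 * u) / (τ + σ2)) * chi2OverMPDF m u := by
    rw [← hval]
    refine setIntegral_mono_on hIlin I1 measurableSet_Ioi (fun u hu => ?_)
    have hsupp := tailG_support htpos (hkpos u hu)
    have heq : A0 * chi2OverMPDF m u - B0 * (u * chi2OverMPDF m u) =
        (tailG t - ψ * (t * (τ + σ2 * u) / (τ + σ2) - t)) * chi2OverMPDF m u := by
      rw [hA0, hB0]
      field_simp
      ring
    rw [heq]
    exact mul_le_mul_of_nonneg_right hsupp (chi2_nonneg m u)
  -- convexity step
  have hconv : ∀ u ∈ Set.Ioi (0:ℝ),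
      tailG (t * (τ' + σ2 * u) / (τ' + σ2)) * chi2OverMPDF m u ≤
      θ * (tailG (t * (τ + σ2 * u) / (τ + σ2)) * chi2OverMPDF m u) +
        ((1 - θ) * tailG t) * chi2OverMPDF m u := by
    intro u hu
    have hid : t * (τ' + σ2 * u) / (τ' + σ2) =
        θ * (t * (τ + σ2 * u) / (τ + σ2)) + (1 - θ) * t := by
      rw [hθdef]
      field_simp
      ring
    have := tailG_convex (hkpos u hu) htpos hθ0.le (by linarith : (0:ℝ) ≤ 1 - θ)
      (by ring : θ + (1 - θ) = 1)
    rw [hid]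
    calc tailG (θ * (t * (τ + σ2 * u) / (τ + σ2)) + (1 - θ) * t) * chi2OverMPDF m u
        ≤ (θ * tailG (t * (τ + σ2 * u) / (τ + σ2)) + (1 - θ) * tailG t) * chi2OverMPDF m u :=
          mul_le_mul_of_nonneg_right this (chi2_nonneg m u)
      _ = θ * (tailG (t * (τ + σ2 * u) / (τ + σ2)) * chi2OverMPDF m u) +
          ((1 - θ) * tailG t) * chi2OverMPDF m u := by ring
  have Isum : IntegrableOn (fun u =>
      θ * (tailG (t * (τ + σ2 * u) / (τ + σ2)) * chi2OverMPDF m u) +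
        ((1 - θ) * tailG t) * chi2OverMPDF m u) (Set.Ioi 0) :=
    (I1.const_mul θ).add (I2.const_mul _)
  calc ∫ u in Set.Ioi 0, tailG (t * (τ' + σ2 * u) / (τ' + σ2)) * chi2OverMPDF m u
      ≤ ∫ u in Set.Ioi 0, (θ * (tailG (t * (τ + σ2 * u) / (τ + σ2)) * chi2OverMPDF m u) +
          ((1 - θ) * tailG t) * chi2OverMPDF m u) :=
        setIntegral_mono_on I1' Isum measurableSet_Ioi hconv
    _ = θ * (∫ u in Set.Ioi 0, tailG (t * (τ + σ2 * u) / (τ + σ2)) * chi2OverMPDF m u) +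
          ((1 - θ) * tailG t) * ∫ u in Set.Ioi 0, chi2OverMPDF m u := by
        rw [integral_add (I1.const_mul θ) (I2.const_mul _), integral_const_mul, integral_const_mul]
    _ ≤ ∫ u in Set.Ioi 0, tailG (t * (τ + σ2 * u) / (τ + σ2)) * chi2OverMPDF m u := by
        rw [chi2_integral m hm, mul_one]
        nlinarith [hJ, hθ1, hθ0]
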